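/- Let ν > 0 and m ∈ ℝ with m ≠ 0, and set λ = (1 + e^{−m/(2ν)})/2 and h = (1 − e^{−m/(2ν)})/2. Then ∫_{-∞}^{∞} e^{−x²} / (λ − h·erf(x)) dx = (√π / (2h)) · (m / (2ν)), where erf(x) = (2/√π) ∫₀^x e^{−ξ²} dξ. -/

import Mathlib

open Set MeasureTheory Real

/-- The error function `erf(x) = (2/√π) ∫₀^x e^{-ξ²} dξ`. -/
noncomputable def errorFunction (x : ℝ) : ℝ :=
  (2 / Real.sqrt π) * ∫ ξ in (0:ℝ)..x, Real.exp (-ξ ^ 2)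

lemma gauss_integrable : Integrable (fun x : ℝ => Real.exp (-x ^ 2)) := by
  have := integrable_exp_neg_mul_sq (b := 1) one_pos
  simpa using this

lemma gauss_Ioi : ∫ x in Ioi (0:ℝ), Real.exp (-x ^ 2) = Real.sqrt π / 2 := by
  have := integral_gaussian_Ioi (1 : ℝ)
  simpa using this

lemma gauss_Iic : ∫ x in Iic (0:ℝ), Real.exp (-x ^ 2) = Real.sqrt π / 2 := by
  have h := integral_comp_neg_Iic (0:ℝ) (fun x => Real.exp (-x ^ 2))
  simp only [neg_neg, neg_zero] at h
  rw [show (∫ x in Iic (0:ℝ), Real.exp (-x ^ 2))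
      = ∫ x in Iic (0:ℝ), Real.exp (-(-x) ^ 2) by simp, h, gauss_Ioi]

lemma erf_hasDerivAt (x : ℝ) :
    HasDerivAt errorFunction ((2 / Real.sqrt π) * Real.exp (-x ^ 2)) x := by
  have h : HasDerivAt (fun u => ∫ ξ in (0:ℝ)..u, Real.exp (-ξ ^ 2))
      (Real.exp (-x ^ 2)) x := by
    have hcont : Continuous (fun ξ : ℝ => Real.exp (-ξ ^ 2)) :=
      Real.continuous_exp.comp (by continuity)
    exact intervalIntegral.integral_hasDerivAt_right
      gauss_integrable.intervalIntegrable (hcont.stronglyMeasurableAtFilter _ _)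
      hcont.continuousAt
  exact h.const_mul _

lemma erf_abs_le (x : ℝ) : |errorFunction x| ≤ 1 := by
  have sqrtpi_pos : 0 < Real.sqrt π := Real.sqrt_pos.2 Real.pi_pos
  have key : ∀ y : ℝ, 0 ≤ y → |∫ ξ in (0:ℝ)..y, Real.exp (-ξ ^ 2)| ≤ Real.sqrt π / 2 := by
    intro y hy
    rw [intervalIntegral.integral_of_le hy]
    have h1 : (0:ℝ) ≤ ∫ ξ in Ioc (0:ℝ) y, Real.exp (-ξ ^ 2) :=
      setIntegral_nonneg measurableSet_Ioc (fun _ _ => (Real.exp_pos _).le)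
    have h2 : (∫ ξ in Ioc (0:ℝ) y, Real.exp (-ξ ^ 2))
        ≤ ∫ ξ in Ioi (0:ℝ), Real.exp (-ξ ^ 2) := by
      apply setIntegral_mono_set gauss_integrable.integrableOn
        (Filter.Eventually.of_forall fun _ => (Real.exp_pos _).le)
      exact HasSubset.Subset.eventuallyLE Ioc_subset_Ioi_self
    rw [abs_of_nonneg h1]
    calc _ ≤ _ := h2
    _ = _ := gauss_Ioi
  have keyneg : ∀ y : ℝ, y < 0 → |∫ ξ in (0:ℝ)..y, Real.exp (-ξ ^ 2)| ≤ Real.sqrt π / 2 := by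
    intro y hy
    rw [intervalIntegral.integral_symm, abs_neg, intervalIntegral.integral_of_le hy.le]
    have h1 : (0:ℝ) ≤ ∫ ξ in Ioc y (0:ℝ), Real.exp (-ξ ^ 2) :=
      setIntegral_nonneg measurableSet_Ioc (fun _ _ => (Real.exp_pos _).le)
    have h2 : (∫ ξ in Ioc y (0:ℝ), Real.exp (-ξ ^ 2))
        ≤ ∫ ξ in Iic (0:ℝ), Real.exp (-ξ ^ 2) := by
      apply setIntegral_mono_set gauss_integrable.integrableOn
        (Filter.Eventually.of_forall fun _ => (Real.exp_pos _).le)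
      exact HasSubset.Subset.eventuallyLE Ioc_subset_Iic_self
    rw [abs_of_nonneg h1]
    calc _ ≤ _ := h2
    _ = _ := gauss_Iic
  have main : ∀ y : ℝ, |∫ ξ in (0:ℝ)..y, Real.exp (-ξ ^ 2)| ≤ Real.sqrt π / 2 := by
    intro y
    rcases le_or_gt 0 y with hy | hy
    · exact key y hy
    · exact keyneg y hy
  have := main x
  rw [errorFunction, abs_mul, abs_of_nonneg (by positivity : (0:ℝ) ≤ 2 / Real.sqrt π)]
  calc 2 / Real.sqrt π * |∫ ξ in (0:ℝ)..x, Real.exp (-ξ ^ 2)|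
      ≤ 2 / Real.sqrt π * (Real.sqrt π / 2) := by
        exact mul_le_mul_of_nonneg_left this (by positivity)
    _ = 1 := by field_simp

lemma erf_tendsto_atTop : Filter.Tendsto errorFunction Filter.atTop (nhds 1) := by
  have sqrtpi_pos : 0 < Real.sqrt π := Real.sqrt_pos.2 Real.pi_pos
  have h : Filter.Tendsto (fun y => ∫ ξ in (0:ℝ)..y, Real.exp (-ξ ^ 2)) Filter.atTop
      (nhds (∫ ξ in Ioi (0:ℝ), Real.exp (-ξ ^ 2))) :=
    intervalIntegral_tendsto_integral_Ioi 0 gauss_integrable.integrableOn Filter.tendsto_id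
  rw [gauss_Ioi] at h
  have := h.const_mul (2 / Real.sqrt π)
  convert this using 2
  · rfl
  · field_simp

lemma erf_tendsto_atBot : Filter.Tendsto errorFunction Filter.atBot (nhds (-1)) := by
  have sqrtpi_pos : 0 < Real.sqrt π := Real.sqrt_pos.2 Real.pi_pos
  have h : Filter.Tendsto (fun y => ∫ ξ in y..(0:ℝ), Real.exp (-ξ ^ 2)) Filter.atBot
      (nhds (∫ ξ in Iic (0:ℝ), Real.exp (-ξ ^ 2))) :=
    intervalIntegral_tendsto_integral_Iic 0 gauss_integrable.integrableOn Filter.tendsto_id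
  rw [gauss_Iic] at h
  have h2 : Filter.Tendsto (fun y => ∫ ξ in (0:ℝ)..y, Real.exp (-ξ ^ 2)) Filter.atBot
      (nhds (-(Real.sqrt π / 2))) := by
    have heq : (fun y : ℝ => ∫ ξ in (0:ℝ)..y, Real.exp (-ξ ^ 2))
        = fun y => -(∫ ξ in y..(0:ℝ), Real.exp (-ξ ^ 2)) := by
      funext y; rw [intervalIntegral.integral_symm]
    rw [heq]
    exact h.neg
  have := h2.const_mul (2 / Real.sqrt π)
  convert this using 2
  · rfl
  · field_simp

theorem asymptotic_profile_integral_value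
    (ν m : ℝ) (hν : 0 < ν) (hm : m ≠ 0)
    (lam h : ℝ)
    (hlam : lam = (1 + Real.exp (-(m / (2 * ν)))) / 2)
    (hh : h = (1 - Real.exp (-(m / (2 * ν)))) / 2) :
    ∫ x : ℝ, Real.exp (-x ^ 2) / (lam - h * errorFunction x)
      = (Real.sqrt π / (2 * h)) * (m / (2 * ν)) := by
  set E := Real.exp (-(m / (2 * ν))) with hE
  have hEpos : 0 < E := Real.exp_pos _
  have hEne : E ≠ 1 := by
    rw [hE, Ne, Real.exp_eq_one_iff]
    intro hc
    apply hm
    have h2ν : (2 * ν) ≠ 0 := by positivity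
    field_simp at hc
    linarith [hc]
  have hhne : h ≠ 0 := by
    rw [hh]
    intro hc
    apply hEne
    linarith [hc]
  have sqrtpi_pos : 0 < Real.sqrt π := Real.sqrt_pos.2 Real.pi_pos
  set c := min 1 E with hc
  have hcpos : 0 < c := lt_min one_pos hEpos
  -- denominator lower bound
  have hden : ∀ x : ℝ, c ≤ lam - h * errorFunction x := by
    intro x
    have hb := erf_abs_le x
    rw [abs_le] at hb
    have : lam - h * errorFunction x
        = (1 - errorFunction x) / 2 + E * ((1 + errorFunction x) / 2) := by
      rw [hlam, hh]; ring
    rw [this, hc]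
    rcases le_total E 1 with hE1 | hE1
    · rw [min_eq_right hE1]
      nlinarith [hb.1, hb.2]
    · rw [min_eq_left hE1]
      nlinarith [hb.1, hb.2]
  have hdenpos : ∀ x : ℝ, 0 < lam - h * errorFunction x := fun x => lt_of_lt_of_le hcpos (hden x)
  have hdenne : ∀ x : ℝ, lam - h * errorFunction x ≠ 0 := fun x => (hdenpos x).ne'
  -- continuity of erf
  have herf_cont : Continuous errorFunction :=
    continuous_iff_continuousAt.2 fun x => (erf_hasDerivAt x).continuousAt
  have hden_cont : Continuous (fun x => lam - h * errorFunction x) :=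
    continuous_const.sub (continuous_const.mul herf_cont)
  -- antiderivative
  set F : ℝ → ℝ := fun x => -(Real.sqrt π / (2 * h)) * Real.log (lam - h * errorFunction x)
    with hF
  have hderiv : ∀ x : ℝ, HasDerivAt F
      (Real.exp (-x ^ 2) / (lam - h * errorFunction x)) x := by
    intro x
    have hd : HasDerivAt (fun x => lam - h * errorFunction x)
        (0 - h * ((2 / Real.sqrt π) * Real.exp (-x ^ 2))) x :=
      (hasDerivAt_const x lam).sub ((erf_hasDerivAt x).const_mul h)
    have hl := (hd.log (hdenne x)).const_mul (-(Real.sqrt π / (2 * h)))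
    refine hl.congr_deriv ?_
    have hdx := hdenne x
    have hs := sqrtpi_pos.ne'
    field_simp
    ring
  -- integrability
  have hf'cont : Continuous (fun x : ℝ => Real.exp (-x ^ 2) / (lam - h * errorFunction x)) :=
    (Real.continuous_exp.comp (by continuity)).div hden_cont hdenne
  have hint : Integrable (fun x : ℝ => Real.exp (-x ^ 2) / (lam - h * errorFunction x)) := by
    refine (gauss_integrable.mul_const c⁻¹).mono' hf'cont.aestronglyMeasurable
      (Filter.Eventually.of_forall fun x => ?_)
    rw [Real.norm_eq_abs,
      abs_of_nonneg (div_nonneg (Real.exp_pos _).le (hdenpos x).le), div_eq_mul_inv]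
    exact mul_le_mul_of_nonneg_left (inv_anti₀ hcpos (hden x)) (Real.exp_pos _).le
  -- limits
  have hlamh_top : lam - h * 1 = E := by rw [hlam, hh]; ring
  have hlamh_bot : lam - h * (-1) = 1 := by rw [hlam, hh]; ring
  have htop : Filter.Tendsto F Filter.atTop
      (nhds ((Real.sqrt π / (2 * h)) * (m / (2 * ν)))) := by
    have h1 : Filter.Tendsto (fun x => lam - h * errorFunction x) Filter.atTop
        (nhds E) := by
      have h1 := (tendsto_const_nhds (x := lam) (f := Filter.atTop)).sub
        (erf_tendsto_atTop.const_mul h)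
      rwa [hlamh_top] at h1
    have h2 : Filter.Tendsto (fun x => Real.log (lam - h * errorFunction x))
        Filter.atTop (nhds (Real.log E)) :=
      (Real.continuousAt_log hEpos.ne').tendsto.comp h1
    have h3 := h2.const_mul (-(Real.sqrt π / (2 * h)))
    have : -(Real.sqrt π / (2 * h)) * Real.log E
        = (Real.sqrt π / (2 * h)) * (m / (2 * ν)) := by
      rw [hE, Real.log_exp]; ring
    rw [this] at h3
    exact h3
  have hbot : Filter.Tendsto F Filter.atBot (nhds 0) := by
    have h1 : Filter.Tendsto (fun x => lam - h * errorFunction x) Filter.atBot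
        (nhds 1) := by
      have h1 := (tendsto_const_nhds (x := lam) (f := Filter.atBot)).sub
        (erf_tendsto_atBot.const_mul h)
      rwa [hlamh_bot] at h1
    have h2 : Filter.Tendsto (fun x => Real.log (lam - h * errorFunction x))
        Filter.atBot (nhds (Real.log 1)) :=
      (Real.continuousAt_log one_ne_zero).tendsto.comp h1
    rw [Real.log_one] at h2
    have h3 := h2.const_mul (-(Real.sqrt π / (2 * h)))
    rw [mul_zero] at h3
    exact h3
  have := MeasureTheory.integral_of_hasDerivAt_of_tendsto hderiv hint hbot htop
  rw [this]
  ring
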